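/- Let a group G act by automorphisms on trees T and T′, and let θ: T → T′ be a surjective, G-equivariant graph homomorphism. Let C be the set of vertices v of T such that no arc with origin v is pre-backtracking for θ. Then C is G-invariant, C is convex (if u, w ∈ C and d(u,v) + d(v,w) = d(u,w) then v ∈ C), and θ is injective on C. -/

import Mathlib

open SimpleGraph

variable {V V' : Type*}

/-- The automorphism group of a simple graph `T`, as a subgroup of `Equiv.Perm V`. -/
def SimpleGraph.autGroup (T : SimpleGraph V) : Subgroup (Equiv.Perm V) where
  carrier := {g : Equiv.Perm V | ∀ u v : V, T.Adj (g u) (g v) ↔ T.Adj u v}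
  one_mem' := by intro u v; simp
  mul_mem' := by
    intro a b ha hb u v
    simpa using (ha (b u) (b v)).trans (hb u v)
  inv_mem' := by
    intro a ha u v
    simpa using (ha (a⁻¹ u) (a⁻¹ v)).symm

/-- A graph homomorphism `θ : T →g T'` is locally surjective if for each vertex `v` of `T`,
every vertex of `T'` adjacent to `θ v` is the image of a vertex adjacent to `v`. -/
def LocallySurjective {T : SimpleGraph V} {T' : SimpleGraph V'} (θ : T →g T') : Prop :=
  ∀ v : V, ∀ w' : V', T'.Adj (θ v) w' → ∃ w : V, T.Adj v w ∧ θ w = w'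

/-- The arc `(u,v)` is backtracking for `θ` if some vertex `u' ≠ u` adjacent to `v`
has `θ u' = θ u`. -/
def Backtracking {T : SimpleGraph V} {T' : SimpleGraph V'} (θ : T →g T') (u v : V) : Prop :=
  T.Adj u v ∧ ∃ u' : V, u' ≠ u ∧ T.Adj u' v ∧ θ u' = θ u

/-- The arc `(u,v)` is pre-backtracking for `θ` if there is a backtracking arc `(u',v')`
whose half-tree `T_{(u',v')}` is contained in the half-tree `T_{(u,v)}`. -/
def PreBacktracking {T : SimpleGraph V} {T' : SimpleGraph V'} (θ : T →g T') (u v : V) : Prop :=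
  T.Adj u v ∧ ∃ u' v' : V, Backtracking θ u' v' ∧
    ∀ w : V, T.dist w v' < T.dist w u' → T.dist w v < T.dist w u

section TreeAux

variable {T : SimpleGraph V}

lemma walk_eq (hT : T.IsTree) {a b : V} (p q : T.Walk a b) (hp : p.IsPath) (hq : q.IsPath) :
    p = q := by
  have := (isAcyclic_iff_path_unique.mp hT.2) ⟨p, hp⟩ ⟨q, hq⟩
  exact congrArg Subtype.val this

lemma isPath_concat' {a b c : V} {p : T.Walk a b} (hp : p.IsPath) (h : T.Adj b c)
    (hc : c ∉ p.support) : (p.concat h).IsPath := by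
  rw [← Walk.isPath_reverse_iff, Walk.reverse_concat]
  exact Walk.IsPath.cons (by rwa [Walk.isPath_reverse_iff])
    (by rwa [Walk.support_reverse, List.mem_reverse])

lemma dist_add_of_mem_support (hT : T.IsTree) {a b z : V} (p : T.Walk a b)
    (hp : p.length = T.dist a b) (hz : z ∈ p.support) :
    T.dist a z + T.dist z b = T.dist a b := by
  classical
  have h1 : T.dist a z ≤ (p.takeUntil z hz).length := dist_le _
  have h2 : T.dist z b ≤ (p.dropUntil z hz).length := dist_le _
  have h3 : (p.takeUntil z hz).length + (p.dropUntil z hz).length = p.length := by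
    rw [← Walk.length_append, p.take_spec hz]
  have h4 := hT.isConnected.dist_triangle (u := a) (v := z) (w := b)
  omega

lemma dist_ne_of_adj (hT : T.IsTree) {x y : V} (h : T.Adj x y) (w : V) :
    T.dist w x ≠ T.dist w y := by
  intro heq
  obtain ⟨p, hp, hl⟩ := hT.isConnected.exists_path_of_dist w x
  have hy : y ∉ p.support := by
    intro hy
    have := dist_add_of_mem_support hT p hl hy
    have hyx : T.dist y x = 1 := dist_eq_one_iff_adj.mpr h.symm
    omega
  obtain ⟨q, hq, hql⟩ := hT.isConnected.exists_path_of_dist w y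
  have := walk_eq hT (p.concat h) q (isPath_concat' hp h hy) hq
  have hlen := congrArg Walk.length this
  rw [Walk.length_concat] at hlen
  omega

lemma adj_dist_cases (hT : T.IsTree) {x y : V} (h : T.Adj x y) (w : V) :
    T.dist w x + 1 = T.dist w y ∨ T.dist w y + 1 = T.dist w x := by
  have hne := dist_ne_of_adj hT h w
  have hxy : T.dist x y = 1 := dist_eq_one_iff_adj.mpr h
  have hyx : T.dist y x = 1 := dist_eq_one_iff_adj.mpr h.symm
  have t1 : T.dist w x ≤ T.dist w y + T.dist y x := hT.isConnected.dist_triangle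
  have t2 : T.dist w y ≤ T.dist w x + T.dist x y := hT.isConnected.dist_triangle
  omega

lemma crossing (hT : T.IsTree) {v x a b : V} (hvx : T.Adj v x) (hab : T.Adj a b)
    (ha : T.dist a x < T.dist a v) (hb : T.dist b v < T.dist b x) : a = x ∧ b = v := by
  have hxv : T.dist x v = 1 := dist_eq_one_iff_adj.mpr hvx.symm
  have hvx1 : T.dist v x = 1 := dist_eq_one_iff_adj.mpr hvx
  have hab1 : T.dist a b = 1 := dist_eq_one_iff_adj.mpr hab
  have hba1 : T.dist b a = 1 := dist_eq_one_iff_adj.mpr hab.symm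
  have hA1 : T.dist a v = T.dist a x + 1 := by
    have := hT.isConnected.dist_triangle (u := a) (v := x) (w := v); omega
  have hA2 : T.dist b x = T.dist b v + 1 := by
    have := hT.isConnected.dist_triangle (u := b) (v := v) (w := x); omega
  have hk1 : T.dist a v ≤ T.dist a b + T.dist b v := hT.isConnected.dist_triangle
  have hk2 : T.dist b x ≤ T.dist b a + T.dist a x := hT.isConnected.dist_triangle
  have hk : T.dist b v = T.dist a x := by omega
  obtain ⟨p, hl⟩ := hT.isConnected.exists_walk_length_eq_dist a x
  obtain ⟨q, hql⟩ := hT.isConnected.exists_walk_length_eq_dist b v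
  have hp1 : (p.concat hvx.symm).length = T.dist a v := by
    rw [Walk.length_concat]; omega
  have hp2 : (Walk.cons hab q).length = T.dist a v := by
    simp only [Walk.length_cons]; omega
  have hP1 : (p.concat hvx.symm).IsPath := Walk.isPath_of_length_eq_dist _ hp1
  have hP2 : (Walk.cons hab q).IsPath := Walk.isPath_of_length_eq_dist _ hp2
  have heq := walk_eq hT (p.concat hvx.symm) (Walk.cons hab q) hP1 hP2
  have hbmem : b ∈ (p.concat hvx.symm).support := by
    rw [heq]; simp [Walk.support_cons]
  have hxmem : x ∈ (Walk.cons hab q).support := by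
    rw [← heq]; rw [Walk.support_concat]
    have : x ∈ p.support := Walk.end_mem_support p
    simp [this]
  constructor
  · rw [Walk.support_cons] at hxmem
    rcases List.mem_cons.mp hxmem with h1 | h1
    · exact h1.symm ▸ rfl
    · exfalso
      have := dist_add_of_mem_support hT q hql h1
      have : T.dist b x + T.dist x v = T.dist b v := this
      omega
  · rw [Walk.support_concat] at hbmem
    rw [List.mem_append, List.mem_singleton] at hbmem
    rcases hbmem with h1 | h1
    · exfalso
      have := dist_add_of_mem_support hT p hl h1
      omega
    · exact h1

lemma between (hT : T.IsTree) {v x w u : V} (hvx : T.Adj v x)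
    (hw : T.dist w x < T.dist w v) (hu : T.dist u v < T.dist u x) :
    T.dist w u = T.dist w v + T.dist v u := by
  obtain ⟨p, hl⟩ := hT.isConnected.exists_walk_length_eq_dist w u
  have hfind : ∃ i < p.length, T.dist (p.getVert i) x < T.dist (p.getVert i) v ∧
      ¬ T.dist (p.getVert (i+1)) x < T.dist (p.getVert (i+1)) v := by
    by_contra hcon
    push_neg at hcon
    have hall : ∀ i ≤ p.length, T.dist (p.getVert i) x < T.dist (p.getVert i) v := by
      intro i
      induction i with
      | zero => intro _; simpa [Walk.getVert_zero] using hw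
      | succ k ih =>
        intro hk
        exact hcon k (by omega) (ih (by omega))
    have := hall p.length le_rfl
    rw [Walk.getVert_length] at this
    omega
  obtain ⟨i, hi, hPi, hPi1⟩ := hfind
  have hadj := p.adj_getVert_succ hi
  have hside : T.dist (p.getVert (i+1)) v < T.dist (p.getVert (i+1)) x := by
    have := dist_ne_of_adj hT hvx (p.getVert (i+1))
    omega
  obtain ⟨hxx, hvv⟩ := crossing hT hvx hadj hPi hside
  have hvmem : v ∈ p.support := by
    rw [Walk.mem_support_iff_exists_getVert]
    exact ⟨i+1, hvv, by omega⟩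
  exact (dist_add_of_mem_support hT p hl hvmem).symm

lemma parent_unique (hT : T.IsTree) {r p q₁ q₂ : V} (h1 : T.Adj q₁ p) (h2 : T.Adj q₂ p)
    (d1 : T.dist r q₁ + 1 = T.dist r p) (d2 : T.dist r q₂ + 1 = T.dist r p) : q₁ = q₂ := by
  obtain ⟨w1, hw1⟩ := hT.isConnected.exists_walk_length_eq_dist r q₁
  obtain ⟨w2, hw2⟩ := hT.isConnected.exists_walk_length_eq_dist r q₂
  have hp1 : (w1.concat h1).IsPath := by
    apply Walk.isPath_of_length_eq_dist
    rw [Walk.length_concat]; omega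
  have hp2 : (w2.concat h2).IsPath := by
    apply Walk.isPath_of_length_eq_dist
    rw [Walk.length_concat]; omega
  have heq := walk_eq hT (w1.concat h1) (w2.concat h2) hp1 hp2
  obtain ⟨hv, -⟩ := Walk.concat_inj heq
  exact hv

lemma exists_adj_dist (hT : T.IsTree) {u v : V} (h : u ≠ v) :
    ∃ y : V, T.Adj u y ∧ T.dist y v + 1 = T.dist u v := by
  have hd : T.dist u v ≠ 0 := fun h0 => h (hT.isConnected.dist_eq_zero_iff.mp h0)
  obtain ⟨p, hl⟩ := hT.isConnected.exists_walk_length_eq_dist u v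
  cases p with
  | nil => simp at hl hd
  | @cons _ y _ hadj q =>
    refine ⟨y, hadj, ?_⟩
    have h1 : T.dist y v ≤ q.length := dist_le q
    have h2 : T.dist u v ≤ T.dist u y + T.dist y v := hT.isConnected.dist_triangle
    have h3 : T.dist u y ≤ 1 := by
      rw [dist_eq_one_iff_adj.mpr hadj]
    simp only [Walk.length_cons] at hl
    omega

lemma autGroup_dist (hc : T.Connected) (g : T.autGroup) (x y : V) :
    T.dist (g.val x) (g.val y) = T.dist x y := by
  have key : ∀ (h : ↥T.autGroup) (a b : V), T.dist (h.val a) (h.val b) ≤ T.dist a b := by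
    intro h a b
    obtain ⟨p, hl⟩ := hc.exists_walk_length_eq_dist a b
    let f : T →g T := ⟨⇑h.val, fun hadj => (h.prop _ _).mpr hadj⟩
    have := dist_le (p.map f)
    rwa [Walk.length_map, hl] at this
  refine le_antisymm (key g x y) ?_
  have := key g⁻¹ (g.val x) (g.val y)
  have hx : (g⁻¹ : ↥T.autGroup).val (g.val x) = x := by simp
  have hy : (g⁻¹ : ↥T.autGroup).val (g.val y) = y := by simp
  rwa [hx, hy] at this

end TreeAux

/-- Lemma: let a group `G` act by automorphisms on trees `T`, `T'` and let `θ : T → T'` be a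
surjective `G`-equivariant graph homomorphism. Then the set `C` of vertices of `T` from
which no pre-backtracking arc originates is `G`-invariant, convex, and `θ` is injective
on `C`. -/
theorem nonPreBacktracking_set_invariant_convex_injective
    {G : Type*} [Group G]
    (T : SimpleGraph V) (T' : SimpleGraph V') (hT : T.IsTree) (hT' : T'.IsTree)
    (φ : G →* ↥(T.autGroup)) (ψ : G →* ↥(T'.autGroup))
    (θ : T →g T') (hsurj : Function.Surjective ⇑θ)
    (hequiv : ∀ (g : G) (x : V), θ ((φ g).val x) = (ψ g).val (θ x)) :
    (∀ g : G, ∀ v : V, v ∈ {v : V | ¬ ∃ u : V, PreBacktracking θ v u} →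
      (φ g).val v ∈ {v : V | ¬ ∃ u : V, PreBacktracking θ v u}) ∧
    (∀ u ∈ {v : V | ¬ ∃ u : V, PreBacktracking θ v u},
      ∀ w ∈ {v : V | ¬ ∃ u : V, PreBacktracking θ v u},
      ∀ v : V, T.dist u v + T.dist v w = T.dist u w →
        v ∈ {v : V | ¬ ∃ u : V, PreBacktracking θ v u}) ∧
    (∀ u ∈ {v : V | ¬ ∃ u : V, PreBacktracking θ v u},
      ∀ v ∈ {v : V | ¬ ∃ u : V, PreBacktracking θ v u},
      θ u = θ v → u = v) := by
  refine ⟨?_, ?_, ?_⟩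
  · -- G-invariance
    intro g v hv
    simp only [Set.mem_setOf_eq] at hv ⊢
    rintro ⟨u, hadj, a, b, ⟨hab, a', ha'ne, ha'adj, hθa⟩, hcont⟩
    have hcomp : ∀ z : V, (φ g⁻¹).val ((φ g).val z) = z := by
      intro z
      have h1 : (φ g⁻¹) * (φ g) = 1 := by rw [← map_mul, inv_mul_cancel, map_one]
      have := congrArg (fun (h : ↥T.autGroup) => h.val z) h1
      simpa [Equiv.Perm.mul_apply] using this
    set s := (φ g⁻¹).val with hs
    have hadjmap : ∀ {x y : V}, T.Adj x y → T.Adj (s x) (s y) :=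
      fun h => ((φ g⁻¹).prop _ _).mpr h
    have key2 : ∀ z w : V, T.dist (s z) (s w) = T.dist z w :=
      fun z w => autGroup_dist hT.isConnected (φ g⁻¹) z w
    apply hv
    refine ⟨s u, ?_, s a, s b, ⟨hadjmap hab, s a', ?_, hadjmap ha'adj, ?_⟩, ?_⟩
    · have := hadjmap hadj
      rwa [hcomp v] at this
    · intro he
      exact ha'ne (((φ g⁻¹).val).injective he)
    · rw [hs]
      rw [hequiv g⁻¹ a', hequiv g⁻¹ a, hθa]
    · intro t ht
      have ht' : T.dist ((φ g).val t) b < T.dist ((φ g).val t) a := by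
        have e1 : T.dist t (s b) = T.dist ((φ g).val t) b := by
          conv_lhs => rw [← hcomp t]
          exact key2 _ _
        have e2 : T.dist t (s a) = T.dist ((φ g).val t) a := by
          conv_lhs => rw [← hcomp t]
          exact key2 _ _
        rwa [e1, e2] at ht
      have h2 := hcont ((φ g).val t) ht'
      have e3 : T.dist t (s u) = T.dist ((φ g).val t) u := by
        conv_lhs => rw [← hcomp t]
        exact key2 _ _
      have e4 : T.dist t v = T.dist ((φ g).val t) ((φ g).val v) := by
        conv_lhs => rw [← hcomp t, ← hcomp v]
        exact key2 _ _
      rw [e3, e4]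
      exact h2
  · -- convexity
    intro u hu w hw v hvmid
    simp only [Set.mem_setOf_eq] at hu hw ⊢
    by_cases h1 : v = u
    · rwa [h1]
    by_cases h2 : v = w
    · rwa [h2]
    rintro ⟨x, hadj, aa, bb, hback, hcont⟩
    have main : ∀ u₀ : V, (¬∃ y, PreBacktracking θ u₀ y) → u₀ ≠ v →
        ¬(T.dist u₀ x < T.dist u₀ v) → False := by
      intro u₀ hu₀ hne hside
      have hAdj : T.dist u₀ v < T.dist u₀ x := by
        have := dist_ne_of_adj hT hadj u₀
        omega
      obtain ⟨y, hy1, hy2⟩ := exists_adj_dist hT hne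
      apply hu₀
      refine ⟨y, hy1, aa, bb, hback, ?_⟩
      intro t ht
      have htx := hcont t ht
      have hB := between hT hadj htx hAdj
      have tri : T.dist t y ≤ T.dist t v + T.dist v y := hT.isConnected.dist_triangle
      have c1 : T.dist v y = T.dist y v := SimpleGraph.dist_comm
      have c2 : T.dist v u₀ = T.dist u₀ v := SimpleGraph.dist_comm
      omega
    by_cases hside : T.dist u x < T.dist u v
    · have hwside : ¬ (T.dist w x < T.dist w v) := by
        intro hw2
        have t1 : T.dist u w ≤ T.dist u x + T.dist x w := hT.isConnected.dist_triangle
        have c1 : T.dist x w = T.dist w x := SimpleGraph.dist_comm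
        have c2 : T.dist v w = T.dist w v := SimpleGraph.dist_comm
        omega
      exact main w hw (fun he => h2 he.symm) hwside
    · exact main u hu (fun he => h1 he.symm) hside
  · -- injectivity on C
    intro a ha b hb hθeq
    simp only [Set.mem_setOf_eq] at ha hb
    by_contra hne
    obtain ⟨p, hl⟩ := hT.isConnected.exists_walk_length_eq_dist a b
    have hn : 0 < p.length := by
      rw [hl]
      exact hT.isConnected.pos_dist_of_ne hne
    have hstep : ∀ i j : ℕ, i ≤ j → j ≤ p.length →
        T.dist (p.getVert i) (p.getVert j) ≤ j - i := by
      intro i j hij hjn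
      induction j, hij using Nat.le_induction with
      | base => simp [dist_self]
      | succ k hk ih =>
        have hadj := p.adj_getVert_succ (by omega : k < p.length)
        have h1 : T.dist (p.getVert k) (p.getVert (k+1)) = 1 := dist_eq_one_iff_adj.mpr hadj
        have tri : T.dist (p.getVert i) (p.getVert (k+1)) ≤
            T.dist (p.getVert i) (p.getVert k) + T.dist (p.getVert k) (p.getVert (k+1)) :=
          hT.isConnected.dist_triangle
        have := ih (by omega)
        omega
    have hdu : ∀ i ≤ p.length, T.dist a (p.getVert i) = i ∧
        T.dist (p.getVert i) b = p.length - i := by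
      intro i hi
      have h1 : T.dist a (p.getVert i) ≤ i := by
        have := hstep 0 i (by omega) hi
        rwa [Walk.getVert_zero] at this
      have h2 : T.dist (p.getVert i) b ≤ p.length - i := by
        have := hstep i p.length hi le_rfl
        rwa [Walk.getVert_length] at this
      have h3 : T.dist a (p.getVert i) + T.dist (p.getVert i) b = T.dist a b :=
        dist_add_of_mem_support hT p hl
          (Walk.mem_support_iff_exists_getVert.mpr ⟨i, rfl, hi⟩)
      omega
    -- distances of images from θ a
    obtain ⟨i, hi_mem, hmax⟩ := Finset.exists_max_image (Finset.range (p.length + 1))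
      (fun j => T'.dist (θ a) (θ (p.getVert j))) ⟨0, by simp⟩
    have hD0 : T'.dist (θ a) (θ (p.getVert 0)) = 0 := by
      rw [Walk.getVert_zero]; exact dist_self
    have hDn : T'.dist (θ a) (θ (p.getVert p.length)) = 0 := by
      rw [Walk.getVert_length, ← hθeq]; exact dist_self
    have hD1 : T'.dist (θ a) (θ (p.getVert 1)) = 1 := by
      apply dist_eq_one_iff_adj.mpr
      have := θ.map_adj (p.adj_getVert_succ hn)
      rwa [Walk.getVert_zero] at this
    have hiD : 1 ≤ T'.dist (θ a) (θ (p.getVert i)) := by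
      have := hmax 1 (by simp; omega)
      omega
    have hin : i ≤ p.length := by
      have := Finset.mem_range.mp hi_mem; omega
    have hi0 : i ≠ 0 := by
      intro h; rw [h] at hiD; omega
    have hinn : i ≠ p.length := by
      intro h; rw [h] at hiD; omega
    obtain ⟨j, rfl⟩ : ∃ j, i = j + 1 := ⟨i - 1, by omega⟩
    have hjn : j < p.length := by omega
    have hj1n : j + 1 < p.length := by omega
    have hadjj := p.adj_getVert_succ hjn
    have hadji : T.Adj (p.getVert (j+1)) (p.getVert (j+2)) := p.adj_getVert_succ hj1n
    have e1 : T'.dist (θ a) (θ (p.getVert j)) + 1 =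
        T'.dist (θ a) (θ (p.getVert (j+1))) := by
      rcases adj_dist_cases hT' (θ.map_adj hadjj) (θ a) with h | h
      · exact h
      · have := hmax j (by simp; omega)
        omega
    have e2 : T'.dist (θ a) (θ (p.getVert (j+2))) + 1 =
        T'.dist (θ a) (θ (p.getVert (j+1))) := by
      rcases adj_dist_cases hT' (θ.map_adj hadji) (θ a) with h | h
      · have := hmax (j+2) (by simp; omega)
        omega
      · exact h
    have hpar : θ (p.getVert j) = θ (p.getVert (j+2)) := by
      exact parent_unique hT' (r := θ a) (θ.map_adj hadjj) (θ.map_adj hadji).symm e1 e2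
    have hne2 : p.getVert (j+2) ≠ p.getVert j := by
      intro heq
      have ha1 := (hdu (j+2) (by omega)).1
      have ha2 := (hdu j (by omega)).1
      rw [heq] at ha1
      omega
    have hback : Backtracking θ (p.getVert j) (p.getVert (j+1)) :=
      ⟨hadjj, p.getVert (j+2), hne2, hadji.symm, hpar.symm⟩
    apply ha
    have hadj01 : T.Adj a (p.getVert 1) := by
      have := p.adj_getVert_succ hn
      rwa [Walk.getVert_zero] at this
    refine ⟨p.getVert 1, hadj01, p.getVert j, p.getVert (j+1), hback, ?_⟩
    intro t ht
    by_cases hj0 : j = 0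
    · subst hj0
      have : p.getVert 0 = a := Walk.getVert_zero p
      rw [this] at ht
      exact ht
    · have hdaj : T.dist a (p.getVert j) < T.dist a (p.getVert (j+1)) := by
        have h1 := (hdu j (by omega)).1
        have h2 := (hdu (j+1) (by omega)).1
        omega
      have hB := between hT hadjj ht hdaj
      have hja : T.dist (p.getVert j) a = j := by
        rw [SimpleGraph.dist_comm]; exact (hdu j (by omega)).1
      have tri : T.dist t (p.getVert 1) ≤
          T.dist t (p.getVert j) + T.dist (p.getVert j) (p.getVert 1) :=
        hT.isConnected.dist_triangle
      have hjl : T.dist (p.getVert j) (p.getVert 1) ≤ j - 1 := by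
        rw [SimpleGraph.dist_comm]
        exact hstep 1 j (by omega) (by omega)
      omega
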